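/- The single-qubit amplitude damping channel with parameter γ ∈ (0,1) is strictly contractive in trace norm: there exists r < 1 (namely r = max(1 − γ/2, γ/2) suffices, and in fact r = √(1−γ) works) such that ‖D(ρ) − D(σ)‖₁ ≤ r‖ρ − σ‖₁ for all single-qubit density operators ρ, σ. -/

import Mathlib

open Matrix ComplexOrder

/-- Trace norm of a complex matrix: `‖A‖₁ = Tr √(AᴴA)`. -/
noncomputable def traceNorm {n : Type*} [Fintype n] [DecidableEq n]
    (A : Matrix n n ℂ) : ℝ :=
  (((posSemidef_conjTranspose_mul_self A).1.eigenvectorUnitary : Matrix n n ℂ) *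
      diagonal (((↑) : ℝ → ℂ) ∘ Real.sqrt ∘ (posSemidef_conjTranspose_mul_self A).1.eigenvalues) *
      (star (posSemidef_conjTranspose_mul_self A).1.eigenvectorUnitary : Matrix n n ℂ)).trace.re

/-- A density operator: positive semidefinite with unit trace. -/
def IsDensity {n : Type*} [Fintype n] [DecidableEq n] (ρ : Matrix n n ℂ) : Prop :=
  ρ.PosSemidef ∧ ρ.trace = 1

/-- First Kraus operator of the amplitude damping channel. -/
noncomputable def K0 (γ : ℝ) : Matrix (Fin 2) (Fin 2) ℂ :=
  !![1, 0; 0, (Real.sqrt (1 - γ) : ℂ)]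

/-- Second Kraus operator of the amplitude damping channel. -/
noncomputable def K1 (γ : ℝ) : Matrix (Fin 2) (Fin 2) ℂ :=
  !![0, (Real.sqrt γ : ℂ); 0, 0]

/-- The single-qubit amplitude damping channel. -/
noncomputable def AD (γ : ℝ) (ρ : Matrix (Fin 2) (Fin 2) ℂ) : Matrix (Fin 2) (Fin 2) ℂ :=
  K0 γ * ρ * (K0 γ)ᴴ + K1 γ * ρ * (K1 γ)ᴴ

lemma traceNorm_of_diag (A : Matrix (Fin 2) (Fin 2) ℂ) (c : ℝ) (hc : 0 ≤ c)
    (h : Aᴴ * A = diagonal (fun _ => ((c^2 : ℝ) : ℂ))) : traceNorm A = 2 * c := by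
  unfold traceNorm
  have hS := (posSemidef_conjTranspose_mul_self A).1.spectral_theorem
  set U := (posSemidef_conjTranspose_mul_self A).1.eigenvectorUnitary with hU
  set ev := (posSemidef_conjTranspose_mul_self A).1.eigenvalues with hev'
  rw [Unitary.conjStarAlgAut_apply] at hS
  have hD : diagonal (RCLike.ofReal ∘ ev : Fin 2 → ℂ) = diagonal (fun _ => ((c^2:ℝ):ℂ)) := by
    have hX : star (U : Matrix (Fin 2) (Fin 2) ℂ) * (Aᴴ * A) * U
        = diagonal (RCLike.ofReal ∘ ev : Fin 2 → ℂ) := by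
      rw [hS, ← mul_assoc, ← mul_assoc, Unitary.coe_star_mul_self, one_mul, mul_assoc,
        Unitary.coe_star_mul_self, mul_one]
    rw [← hX, h, ← smul_one_eq_diagonal]
    simp [Matrix.mul_smul, Matrix.smul_mul]
  have hev : ∀ i, ev i = c^2 := fun i => by
    have := congrFun (diagonal_injective hD) i
    simp at this
    exact_mod_cast this
  rw [trace_mul_cycle, Unitary.coe_star_mul_self, one_mul, trace_diagonal]
  simp [Fin.sum_univ_two, hev, Real.sqrt_sq hc]

lemma traceNorm_form (a : ℝ) (b : ℂ) :
    traceNorm !![(a:ℂ), b; (starRingEnd ℂ) b, -(a:ℂ)]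
      = 2 * Real.sqrt (a^2 + Complex.normSq b) := by
  apply traceNorm_of_diag _ _ (Real.sqrt_nonneg _)
  rw [Real.sq_sqrt (add_nonneg (sq_nonneg a) (Complex.normSq_nonneg b))]
  ext i j
  fin_cases i <;> fin_cases j <;>
    simp [mul_apply, Fin.sum_univ_two, conjTranspose_apply] <;>
    push_cast [Complex.mul_conj, Complex.mul_conj', ← Complex.normSq_eq_conj_mul_self] <;> ring

lemma AD_form (γ : ℝ) (hγ : γ ∈ Set.Ioo (0 : ℝ) 1) (a : ℝ) (b : ℂ) :
    AD γ !![(a:ℂ), b; (starRingEnd ℂ) b, -(a:ℂ)]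
      = !![(((1-γ)*a : ℝ) : ℂ), ((Real.sqrt (1-γ) : ℝ) : ℂ) * b;
          (starRingEnd ℂ) (((Real.sqrt (1-γ) : ℝ) : ℂ) * b), -(((1-γ)*a : ℝ) : ℂ)] := by
  have h1 : ((Real.sqrt (1-γ) : ℝ) : ℂ)^2 = 1 - (γ : ℂ) := by
    rw [← Complex.ofReal_pow, Real.sq_sqrt (by linarith [hγ.2])]; push_cast; ring
  have h2 : ((Real.sqrt γ : ℝ) : ℂ)^2 = ((γ : ℝ) : ℂ) := by
    rw [← Complex.ofReal_pow, Real.sq_sqrt (le_of_lt hγ.1)]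
  have hK0 : (K0 γ)ᴴ = !![1, 0; 0, (Real.sqrt (1 - γ) : ℂ)] := by
    ext i j
    fin_cases i <;> fin_cases j <;> simp [K0, conjTranspose_apply, Complex.conj_ofReal]
  have hK1 : (K1 γ)ᴴ = !![0, 0; (Real.sqrt γ : ℂ), 0] := by
    ext i j
    fin_cases i <;> fin_cases j <;> simp [K1, conjTranspose_apply, Complex.conj_ofReal]
  ext i j
  fin_cases i <;> fin_cases j <;>
    simp [AD, K0, K1, hK0, hK1, mul_apply, Fin.sum_univ_two, Matrix.vecMul,
      dotProduct, conjTranspose_apply, Complex.conj_ofReal, ← sq] <;>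
    push_cast <;>
    first
      | ring1
      | linear_combination (-(a : ℂ)) * h2
      | linear_combination (a : ℂ) * h1

/-- The amplitude damping channel with `γ ∈ (0,1)` is strictly contractive in trace norm,
with contraction constant `r = max (1 - γ/2) (γ/2) < 1`. -/
theorem amplitude_damping_strictly_contractive
    (γ : ℝ) (hγ : γ ∈ Set.Ioo (0 : ℝ) 1) :
    max (1 - γ / 2) (γ / 2) < 1 ∧
      ∀ ρ σ : Matrix (Fin 2) (Fin 2) ℂ, IsDensity ρ → IsDensity σ →
        traceNorm (AD γ ρ - AD γ σ) ≤ max (1 - γ / 2) (γ / 2) * traceNorm (ρ - σ) := by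
  obtain ⟨hγ0, hγ1⟩ := hγ
  refine ⟨max_lt (by linarith) (by linarith), fun ρ σ hρ hσ => ?_⟩
  set Δ := ρ - σ with hΔdef
  have hH : Δ.IsHermitian := hρ.1.1.sub hσ.1.1
  have htr : Δ.trace = 0 := by
    simp [hΔdef, trace_sub, hρ.2, hσ.2]
  set a := (Δ 0 0).re with ha
  set b := Δ 0 1 with hb
  have hform : Δ = !![(a:ℂ), b; (starRingEnd ℂ) b, -(a:ℂ)] := by
    have h00 : Δ 0 0 = (a : ℂ) := by
      have h : (starRingEnd ℂ) (Δ 0 0) = Δ 0 0 := hH.apply 0 0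
      exact (Complex.conj_eq_iff_re.mp h).symm
    have h10 : Δ 1 0 = (starRingEnd ℂ) b := by
      have h : (starRingEnd ℂ) (Δ 1 0) = Δ 0 1 := hH.apply 0 1
      rw [hb, ← h, Complex.conj_conj]
    have h11 : Δ 1 1 = -(a : ℂ) := by
      have : Δ 0 0 + Δ 1 1 = 0 := by
        simpa [Matrix.trace, Fin.sum_univ_two] using htr
      rw [h00] at this; linear_combination this
    ext i j
    fin_cases i <;> fin_cases j <;> simp [h00, h10, h11, hb]
  have hADsub : AD γ ρ - AD γ σ = AD γ Δ := by
    simp only [AD, hΔdef, Matrix.sub_mul, Matrix.mul_sub]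
    abel
  rw [hADsub, hform, AD_form γ ⟨hγ0, hγ1⟩, traceNorm_form, traceNorm_form]
  rw [Complex.normSq_mul]
  have hns : Complex.normSq ((Real.sqrt (1-γ) : ℝ) : ℂ) = 1 - γ := by
    rw [Complex.normSq_ofReal, Real.mul_self_sqrt (by linarith)]
  rw [hns]
  set nb := Complex.normSq b with hnb
  have hnb0 : 0 ≤ nb := Complex.normSq_nonneg b
  have hr : (1 - γ/2) ≤ max (1 - γ / 2) (γ / 2) := le_max_left _ _
  have hstep : Real.sqrt (((1-γ)*a)^2 + (1-γ) * nb)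
      ≤ (1 - γ/2) * Real.sqrt (a^2 + nb) := by
    have hkey : ((1-γ)*a)^2 + (1-γ) * nb ≤ (1 - γ/2)^2 * (a^2 + nb) := by
      nlinarith [sq_nonneg a, sq_nonneg γ, mul_nonneg (mul_nonneg (le_of_lt hγ0) (le_of_lt hγ0)) (sq_nonneg a)]
    calc Real.sqrt (((1-γ)*a)^2 + (1-γ) * nb) ≤ Real.sqrt ((1 - γ/2)^2 * (a^2 + nb)) :=
          Real.sqrt_le_sqrt hkey
      _ = (1 - γ/2) * Real.sqrt (a^2 + nb) := by
          rw [Real.sqrt_mul (sq_nonneg _), Real.sqrt_sq (by linarith)]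
  calc 2 * Real.sqrt (((1-γ)*a)^2 + (1-γ) * nb) ≤ 2 * ((1 - γ/2) * Real.sqrt (a^2 + nb)) := by
        linarith
    _ ≤ max (1 - γ / 2) (γ / 2) * (2 * Real.sqrt (a^2 + nb)) := by
        nlinarith [Real.sqrt_nonneg (a^2 + nb)]
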